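/- The set S has exactly six facets. -/

import Mathlib

/-- The polytope S given by the six inequalities. -/
def S : Set (Fin 3 → ℝ) :=
  {x | 25 - 2 * x 0 - 25 * x 1 + 10 * x 2 ≥ 0 ∧
       -2 + 25 * x 0 + 2 * x 1 + 10 * x 2 ≥ 0 ∧
       25 - 2 * x 0 + 25 * x 1 + 10 * x 2 ≥ 0 ∧
       -2 + 25 * x 0 - 2 * x 1 + 10 * x 2 ≥ 0 ∧
       -(x 1) - x 2 ≥ 0 ∧
       2 - x 1 + x 2 ≥ 0}

/-- A facet of `K` is a proper exposed face of `K` that is maximal (w.r.t. inclusion)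
among proper exposed faces of `K`. -/
def IsFacet (K F : Set (Fin 3 → ℝ)) : Prop :=
  IsExposed ℝ K F ∧ F ≠ K ∧ ∀ G, IsExposed ℝ K G → G ≠ K → F ⊆ G → F = G

def L (b a0 a1 a2 : ℝ) (x : Fin 3 → ℝ) : ℝ := b + a0 * x 0 + a1 * x 1 + a2 * x 2
lemma mem_S {x : Fin 3 → ℝ} : x ∈ S ↔
    0 ≤ L 25 (-2) (-25) 10 x ∧ 0 ≤ L (-2) 25 2 10 x ∧ 0 ≤ L 25 (-2) 25 10 x ∧
    0 ≤ L (-2) 25 (-2) 10 x ∧ 0 ≤ L 0 0 (-1) (-1) x ∧ 0 ≤ L 2 0 (-1) 1 x := by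
  simp only [S, L, Set.mem_setOf_eq, ge_iff_le]
  constructor <;> rintro ⟨h1, h2, h3, h4, h5, h6⟩ <;>
    exact ⟨by linarith, by linarith, by linarith, by linarith, by linarith, by linarith⟩
noncomputable def lf (a0 a1 a2 : ℝ) : (Fin 3 → ℝ) →L[ℝ] ℝ :=
  a0 • ContinuousLinearMap.proj 0 + a1 • ContinuousLinearMap.proj 1 +
    a2 • ContinuousLinearMap.proj 2
lemma lf_apply (a0 a1 a2 : ℝ) (x : Fin 3 → ℝ) :
    lf a0 a1 a2 x = a0 * x 0 + a1 * x 1 + a2 * x 2 := by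
  simp [lf, ContinuousLinearMap.proj_apply, smul_eq_mul]
lemma clm_eq (g : (Fin 3 → ℝ) →L[ℝ] ℝ) (x : Fin 3 → ℝ) :
    g x = x 0 * g (Pi.single 0 1) + x 1 * g (Pi.single 1 1) + x 2 * g (Pi.single 2 1) := by
  have hx : x = x 0 • (Pi.single 0 1 : Fin 3 → ℝ) + x 1 • (Pi.single 1 1 : Fin 3 → ℝ)
      + x 2 • (Pi.single 2 1 : Fin 3 → ℝ) := by
    funext i; fin_cases i <;> simp [Pi.single_apply]
  conv_lhs => rw [hx]
  simp [smul_eq_mul]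

lemma exposed_gen (b a0 a1 a2 : ℝ)
    (hpos : ∀ x ∈ S, 0 ≤ L b a0 a1 a2 x) :
    IsExposed ℝ S {x ∈ S | L b a0 a1 a2 x = 0} := by
  rintro ⟨p, hpS, hp0⟩
  refine ⟨lf (-a0) (-a1) (-a2), ?_⟩
  ext x
  simp only [Set.mem_setOf_eq, lf_apply]
  constructor
  · rintro ⟨hxS, hx0⟩
    refine ⟨hxS, fun y hy => ?_⟩
    have := hpos y hy
    simp only [L] at *
    linarith
  · rintro ⟨hxS, hmax⟩
    have h1 := hmax p hpS
    have h2 := hpos x hxS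
    simp only [L, lf_apply] at *
    exact ⟨hxS, by linarith⟩

lemma facet_gen (b a0 a1 a2 : ℝ) (p1 p2 p3 w : Fin 3 → ℝ)
    (hpos : ∀ x ∈ S, 0 ≤ L b a0 a1 a2 x)
    (hp1S : p1 ∈ S) (hp1 : L b a0 a1 a2 p1 = 0)
    (hp2S : p2 ∈ S) (hp2 : L b a0 a1 a2 p2 = 0)
    (hp3S : p3 ∈ S) (hp3 : L b a0 a1 a2 p3 = 0)
    (hwS : w ∈ S) (hw : 0 < L b a0 a1 a2 w)
    (hspan : ∀ u0 u1 u2 : ℝ,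
      u0 * (p2 0 - p1 0) + u1 * (p2 1 - p1 1) + u2 * (p2 2 - p1 2) = 0 →
      u0 * (p3 0 - p1 0) + u1 * (p3 1 - p1 1) + u2 * (p3 2 - p1 2) = 0 →
      ∃ lam : ℝ, u0 = lam * a0 ∧ u1 = lam * a1 ∧ u2 = lam * a2) :
    IsFacet S {x ∈ S | L b a0 a1 a2 x = 0} := by
  refine ⟨exposed_gen b a0 a1 a2 hpos, ?_, ?_⟩
  · intro h
    have : w ∈ {x ∈ S | L b a0 a1 a2 x = 0} := by rw [h]; exact hwS
    exact absurd this.2 (by linarith)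
  · intro G hGexp hGne hFG
    have hp1F : p1 ∈ {x ∈ S | L b a0 a1 a2 x = 0} := ⟨hp1S, hp1⟩
    obtain ⟨g, hG⟩ := hGexp ⟨p1, hFG hp1F⟩
    have hp1G : p1 ∈ G := hFG hp1F
    have hp2G : p2 ∈ G := hFG ⟨hp2S, hp2⟩
    have hp3G : p3 ∈ G := hFG ⟨hp3S, hp3⟩
    rw [hG] at hp1G hp2G hp3G
    have e21 : g p2 = g p1 := le_antisymm (hp1G.2 p2 hp2S) (hp2G.2 p1 hp1S)
    have e31 : g p3 = g p1 := le_antisymm (hp1G.2 p3 hp3S) (hp3G.2 p1 hp1S)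
    have c1 := clm_eq g p1
    have c2 := clm_eq g p2
    have c3 := clm_eq g p3
    obtain ⟨lam, hu0, hu1, hu2⟩ := hspan (g (Pi.single 0 1)) (g (Pi.single 1 1))
      (g (Pi.single 2 1)) (by rw [c1, c2] at e21; ring_nf; ring_nf at e21; linarith)
      (by rw [c1, c3] at e31; ring_nf; ring_nf at e31; linarith)
    have hg : ∀ x, g x = lam * (L b a0 a1 a2 x - b) := by
      intro x
      rw [clm_eq g x, hu0, hu1, hu2]
      simp only [L]; ring
    rcases lt_trichotomy lam 0 with hlam | hlam | hlam
    · ext x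
      rw [hG]
      simp only [Set.mem_setOf_eq]
      constructor
      · rintro ⟨hxS, hx0⟩
        refine ⟨hxS, fun y hy => ?_⟩
        rw [hg, hg, hx0]
        have := hpos y hy
        nlinarith
      · rintro ⟨hxS, hmax⟩
        have h1 := hmax p1 hp1S
        rw [hg, hg, hp1] at h1
        have h2 := hpos x hxS
        refine ⟨hxS, ?_⟩
        nlinarith
    · exfalso
      apply hGne
      rw [hG]
      ext x
      simp only [Set.mem_setOf_eq]
      refine ⟨fun h => h.1, fun h => ⟨h, fun y _ => ?_⟩⟩
      rw [hg, hg, hlam]; simp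
    · exfalso
      have h1 := hp1G.2 w hwS
      rw [hg, hg, hp1] at h1
      nlinarith

lemma L_avg (b a0 a1 a2 : ℝ) (x1 x2 x3 x4 x5 x6 : Fin 3 → ℝ) :
    L b a0 a1 a2 ((6:ℝ)⁻¹ • (x1+x2+x3+x4+x5+x6)) =
      (L b a0 a1 a2 x1 + L b a0 a1 a2 x2 + L b a0 a1 a2 x3 + L b a0 a1 a2 x4 +
       L b a0 a1 a2 x5 + L b a0 a1 a2 x6) / 6 := by
  simp only [L, Pi.smul_apply, Pi.add_apply, smul_eq_mul]; ring

lemma L_comb (b a0 a1 a2 e : ℝ) (z y : Fin 3 → ℝ) :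
    L b a0 a1 a2 ((1+e) • z - e • y) = (1+e) * L b a0 a1 a2 z - e * L b a0 a1 a2 y := by
  simp only [L, Pi.smul_apply, Pi.sub_apply, smul_eq_mul]; ring

lemma step_ineq (Lz Ly m Y e : ℝ) (hLz : m ≤ Lz) (hm : 0 < m) (hLy : 0 ≤ Ly)
    (hLyY : Ly ≤ Y) (he : 0 < e) (hee : e * (1 + Y) = m) :
    0 ≤ (1+e) * Lz - e * Ly := by nlinarith [mul_le_mul_of_nonneg_left hLyY he.le]

lemma exposed_subset (G : Set (Fin 3 → ℝ)) (hexp : IsExposed ℝ S G) (hne : G ≠ S)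
    (hnon : G.Nonempty) :
    G ⊆ {x ∈ S | L 25 (-2) (-25) 10 x = 0} ∨
    G ⊆ {x ∈ S | L (-2) 25 2 10 x = 0} ∨
    G ⊆ {x ∈ S | L 25 (-2) 25 10 x = 0} ∨
    G ⊆ {x ∈ S | L (-2) 25 (-2) 10 x = 0} ∨
    G ⊆ {x ∈ S | L 0 0 (-1) (-1) x = 0} ∨
    G ⊆ {x ∈ S | L 2 0 (-1) 1 x = 0} := by
  by_contra hcon
  push_neg at hcon
  obtain ⟨hn1, hn2, hn3, hn4, hn5, hn6⟩ := hcon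
  rw [Set.not_subset] at hn1
  obtain ⟨x1, hx1G, hx1⟩ := hn1
  rw [Set.not_subset] at hn2
  obtain ⟨x2, hx2G, hx2⟩ := hn2
  rw [Set.not_subset] at hn3
  obtain ⟨x3, hx3G, hx3⟩ := hn3
  rw [Set.not_subset] at hn4
  obtain ⟨x4, hx4G, hx4⟩ := hn4
  rw [Set.not_subset] at hn5
  obtain ⟨x5, hx5G, hx5⟩ := hn5
  rw [Set.not_subset] at hn6
  obtain ⟨x6, hx6G, hx6⟩ := hn6
  obtain ⟨g, hG⟩ := hexp hnon
  have hGsub : G ⊆ S := by rw [hG]; exact fun x hx => hx.1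
  have hx1S : x1 ∈ S := hGsub hx1G
  have hx2S : x2 ∈ S := hGsub hx2G
  have hx3S : x3 ∈ S := hGsub hx3G
  have hx4S : x4 ∈ S := hGsub hx4G
  have hx5S : x5 ∈ S := hGsub hx5G
  have hx6S : x6 ∈ S := hGsub hx6G
  have hp1 : 0 < L 25 (-2) (-25) 10 x1 := lt_of_le_of_ne (mem_S.mp hx1S).1 (fun h => hx1 ⟨hx1S, h.symm⟩)
  have hp2 : 0 < L (-2) 25 2 10 x2 := lt_of_le_of_ne (mem_S.mp hx2S).2.1 (fun h => hx2 ⟨hx2S, h.symm⟩)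
  have hp3 : 0 < L 25 (-2) 25 10 x3 := lt_of_le_of_ne (mem_S.mp hx3S).2.2.1 (fun h => hx3 ⟨hx3S, h.symm⟩)
  have hp4 : 0 < L (-2) 25 (-2) 10 x4 := lt_of_le_of_ne (mem_S.mp hx4S).2.2.2.1 (fun h => hx4 ⟨hx4S, h.symm⟩)
  have hp5 : 0 < L 0 0 (-1) (-1) x5 := lt_of_le_of_ne (mem_S.mp hx5S).2.2.2.2.1 (fun h => hx5 ⟨hx5S, h.symm⟩)
  have hp6 : 0 < L 2 0 (-1) 1 x6 := lt_of_le_of_ne (mem_S.mp hx6S).2.2.2.2.2 (fun h => hx6 ⟨hx6S, h.symm⟩)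
  set z : Fin 3 → ℝ := (6:ℝ)⁻¹ • (x1+x2+x3+x4+x5+x6) with hzdef
  have hz1 : 0 < L 25 (-2) (-25) 10 z := by
    rw [hzdef, L_avg]
    have := hp1
    have h1 := (mem_S.mp hx1S).1
    have h2 := (mem_S.mp hx2S).1
    have h3 := (mem_S.mp hx3S).1
    have h4 := (mem_S.mp hx4S).1
    have h5 := (mem_S.mp hx5S).1
    have h6 := (mem_S.mp hx6S).1
    linarith
  have hz2 : 0 < L (-2) 25 2 10 z := by
    rw [hzdef, L_avg]
    have := hp2
    have h1 := (mem_S.mp hx1S).2.1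
    have h2 := (mem_S.mp hx2S).2.1
    have h3 := (mem_S.mp hx3S).2.1
    have h4 := (mem_S.mp hx4S).2.1
    have h5 := (mem_S.mp hx5S).2.1
    have h6 := (mem_S.mp hx6S).2.1
    linarith
  have hz3 : 0 < L 25 (-2) 25 10 z := by
    rw [hzdef, L_avg]
    have := hp3
    have h1 := (mem_S.mp hx1S).2.2.1
    have h2 := (mem_S.mp hx2S).2.2.1
    have h3 := (mem_S.mp hx3S).2.2.1
    have h4 := (mem_S.mp hx4S).2.2.1
    have h5 := (mem_S.mp hx5S).2.2.1
    have h6 := (mem_S.mp hx6S).2.2.1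
    linarith
  have hz4 : 0 < L (-2) 25 (-2) 10 z := by
    rw [hzdef, L_avg]
    have := hp4
    have h1 := (mem_S.mp hx1S).2.2.2.1
    have h2 := (mem_S.mp hx2S).2.2.2.1
    have h3 := (mem_S.mp hx3S).2.2.2.1
    have h4 := (mem_S.mp hx4S).2.2.2.1
    have h5 := (mem_S.mp hx5S).2.2.2.1
    have h6 := (mem_S.mp hx6S).2.2.2.1
    linarith
  have hz5 : 0 < L 0 0 (-1) (-1) z := by
    rw [hzdef, L_avg]
    have := hp5
    have h1 := (mem_S.mp hx1S).2.2.2.2.1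
    have h2 := (mem_S.mp hx2S).2.2.2.2.1
    have h3 := (mem_S.mp hx3S).2.2.2.2.1
    have h4 := (mem_S.mp hx4S).2.2.2.2.1
    have h5 := (mem_S.mp hx5S).2.2.2.2.1
    have h6 := (mem_S.mp hx6S).2.2.2.2.1
    linarith
  have hz6 : 0 < L 2 0 (-1) 1 z := by
    rw [hzdef, L_avg]
    have := hp6
    have h1 := (mem_S.mp hx1S).2.2.2.2.2
    have h2 := (mem_S.mp hx2S).2.2.2.2.2
    have h3 := (mem_S.mp hx3S).2.2.2.2.2
    have h4 := (mem_S.mp hx4S).2.2.2.2.2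
    have h5 := (mem_S.mp hx5S).2.2.2.2.2
    have h6 := (mem_S.mp hx6S).2.2.2.2.2
    linarith
  have hx1G' := hx1G
  rw [hG] at hx1G'
  have hmax : ∀ y ∈ S, g y ≤ g x1 := fun y hy => hx1G'.2 y hy
  have key : ∀ y ∈ S, g x1 ≤ g y := by
    intro y hy
    obtain ⟨hy1, hy2, hy3, hy4, hy5, hy6⟩ := mem_S.mp hy
    set m : ℝ := min (min (L 25 (-2) (-25) 10 z) (L (-2) 25 2 10 z)) (min (min (L 25 (-2) 25 10 z) (L (-2) 25 (-2) 10 z)) (min (L 0 0 (-1) (-1) z) (L 2 0 (-1) 1 z))) with hmdef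
    have hm : 0 < m := lt_min (lt_min hz1 hz2) (lt_min (lt_min hz3 hz4) (lt_min hz5 hz6))
    have hml1 : m ≤ L 25 (-2) (-25) 10 z := le_trans (min_le_left _ _) (min_le_left _ _)
    have hml2 : m ≤ L (-2) 25 2 10 z := le_trans (min_le_left _ _) (min_le_right _ _)
    have hml3 : m ≤ L 25 (-2) 25 10 z := le_trans (min_le_right _ _) (le_trans (min_le_left _ _) (min_le_left _ _))
    have hml4 : m ≤ L (-2) 25 (-2) 10 z := le_trans (min_le_right _ _) (le_trans (min_le_left _ _) (min_le_right _ _))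
    have hml5 : m ≤ L 0 0 (-1) (-1) z := le_trans (min_le_right _ _) (le_trans (min_le_right _ _) (min_le_left _ _))
    have hml6 : m ≤ L 2 0 (-1) 1 z := le_trans (min_le_right _ _) (le_trans (min_le_right _ _) (min_le_right _ _))
    set Y : ℝ := L 25 (-2) (-25) 10 y + L (-2) 25 2 10 y + L 25 (-2) 25 10 y + L (-2) 25 (-2) 10 y + L 0 0 (-1) (-1) y + L 2 0 (-1) 1 y with hYdef
    have hY : 0 ≤ Y := by rw [hYdef]; linarith
    set e : ℝ := m / (1 + Y) with hedef
    have he : 0 < e := div_pos hm (by linarith)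
    have hee : e * (1 + Y) = m := div_mul_cancel₀ m (by linarith)
    have hz'S : ((1+e) • z - e • y) ∈ S := by
      rw [mem_S]
      refine ⟨?_, ?_, ?_, ?_, ?_, ?_⟩ <;> rw [L_comb]
      · exact step_ineq _ _ _ _ _ hml1 hm hy1 (by linarith) he hee
      · exact step_ineq _ _ _ _ _ hml2 hm hy2 (by linarith) he hee
      · exact step_ineq _ _ _ _ _ hml3 hm hy3 (by linarith) he hee
      · exact step_ineq _ _ _ _ _ hml4 hm hy4 (by linarith) he hee
      · exact step_ineq _ _ _ _ _ hml5 hm hy5 (by linarith) he hee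
      · exact step_ineq _ _ _ _ _ hml6 hm hy6 (by linarith) he hee
    have hgz : g z = g x1 := by
      have e2 : g x2 = g x1 := le_antisymm (hmax x2 hx2S) (by rw [hG] at hx2G; exact hx2G.2 x1 hx1S)
      have e3 : g x3 = g x1 := le_antisymm (hmax x3 hx3S) (by rw [hG] at hx3G; exact hx3G.2 x1 hx1S)
      have e4 : g x4 = g x1 := le_antisymm (hmax x4 hx4S) (by rw [hG] at hx4G; exact hx4G.2 x1 hx1S)
      have e5 : g x5 = g x1 := le_antisymm (hmax x5 hx5S) (by rw [hG] at hx5G; exact hx5G.2 x1 hx1S)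
      have e6 : g x6 = g x1 := le_antisymm (hmax x6 hx6S) (by rw [hG] at hx6G; exact hx6G.2 x1 hx1S)
      rw [hzdef]
      simp only [map_smul, map_add, smul_eq_mul, e2, e3, e4, e5, e6]
      ring
    have hgz' : g ((1+e) • z - e • y) = (1+e) * g x1 - e * g y := by
      simp only [map_sub, map_smul, smul_eq_mul, hgz]
    have := hmax _ hz'S
    rw [hgz'] at this
    nlinarith
  apply hne
  rw [hG]
  ext x
  simp only [Set.mem_setOf_eq]
  exact ⟨fun h => h.1, fun h => ⟨h, fun y hy => le_trans (hmax y hy) (key x h)⟩⟩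

lemma F_ne {b a0 a1 a2 b' a0' a1' a2' : ℝ} (x : Fin 3 → ℝ) (hx : x ∈ S)
    (h1 : L b a0 a1 a2 x = 0) (h2 : L b' a0' a1' a2' x ≠ 0) :
    {y ∈ S | L b a0 a1 a2 y = 0} ≠ {y ∈ S | L b' a0' a1' a2' y = 0} := by
  intro h
  have : x ∈ {y ∈ S | L b' a0' a1' a2' y = 0} := by rw [← h]; exact ⟨hx, h1⟩
  exact h2 this.2

lemma hpos0 : ∀ x ∈ S, 0 ≤ L 25 (-2) (-25) 10 x := fun x hx => (mem_S.mp hx).1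
lemma hpos1 : ∀ x ∈ S, 0 ≤ L (-2) 25 2 10 x := fun x hx => (mem_S.mp hx).2.1
lemma hpos2 : ∀ x ∈ S, 0 ≤ L 25 (-2) 25 10 x := fun x hx => (mem_S.mp hx).2.2.1
lemma hpos3 : ∀ x ∈ S, 0 ≤ L (-2) 25 (-2) 10 x := fun x hx => (mem_S.mp hx).2.2.2.1
lemma hpos4 : ∀ x ∈ S, 0 ≤ L 0 0 (-1) (-1) x := fun x hx => (mem_S.mp hx).2.2.2.2.1
lemma hpos5 : ∀ x ∈ S, 0 ≤ L 2 0 (-1) 1 x := fun x hx => (mem_S.mp hx).2.2.2.2.2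
lemma pS00 : (![25/2, 0, 0] : Fin 3 → ℝ) ∈ S := by
  simp only [S, Set.mem_setOf_eq]; norm_num [Matrix.cons_val_two]
lemma pL00 : L 25 (-2) (-25) 10 (![25/2, 0, 0]) = 0 := by norm_num [L, Matrix.cons_val_two]
lemma pS01 : (![5/2, 0, -2] : Fin 3 → ℝ) ∈ S := by
  simp only [S, Set.mem_setOf_eq]; norm_num [Matrix.cons_val_two]
lemma pL01 : L 25 (-2) (-25) 10 (![5/2, 0, -2]) = 0 := by norm_num [L, Matrix.cons_val_two]
lemma pS02 : (![25/4, 1/10, -1] : Fin 3 → ℝ) ∈ S := by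
  simp only [S, Set.mem_setOf_eq]; norm_num [Matrix.cons_val_two]
lemma pL02 : L 25 (-2) (-25) 10 (![25/4, 1/10, -1]) = 0 := by norm_num [L, Matrix.cons_val_two]
lemma pS10 : (![2/25, 0, 0] : Fin 3 → ℝ) ∈ S := by
  simp only [S, Set.mem_setOf_eq]; norm_num [Matrix.cons_val_two]
lemma pL10 : L (-2) 25 2 10 (![2/25, 0, 0]) = 0 := by norm_num [L, Matrix.cons_val_two]
lemma pS11 : (![22/25, 0, -2] : Fin 3 → ℝ) ∈ S := by
  simp only [S, Set.mem_setOf_eq]; norm_num [Matrix.cons_val_two]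
lemma pL11 : L (-2) 25 2 10 (![22/25, 0, -2]) = 0 := by norm_num [L, Matrix.cons_val_two]
lemma pS12 : (![61/125, -1/10, -1] : Fin 3 → ℝ) ∈ S := by
  simp only [S, Set.mem_setOf_eq]; norm_num [Matrix.cons_val_two]
lemma pL12 : L (-2) 25 2 10 (![61/125, -1/10, -1]) = 0 := by norm_num [L, Matrix.cons_val_two]
lemma pS20 : (![25/2, 0, 0] : Fin 3 → ℝ) ∈ S := by
  simp only [S, Set.mem_setOf_eq]; norm_num [Matrix.cons_val_two]
lemma pL20 : L 25 (-2) 25 10 (![25/2, 0, 0]) = 0 := by norm_num [L, Matrix.cons_val_two]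
lemma pS21 : (![5/2, 0, -2] : Fin 3 → ℝ) ∈ S := by
  simp only [S, Set.mem_setOf_eq]; norm_num [Matrix.cons_val_two]
lemma pL21 : L 25 (-2) 25 10 (![5/2, 0, -2]) = 0 := by norm_num [L, Matrix.cons_val_two]
lemma pS22 : (![25/4, -1/10, -1] : Fin 3 → ℝ) ∈ S := by
  simp only [S, Set.mem_setOf_eq]; norm_num [Matrix.cons_val_two]
lemma pL22 : L 25 (-2) 25 10 (![25/4, -1/10, -1]) = 0 := by norm_num [L, Matrix.cons_val_two]
lemma pS30 : (![2/25, 0, 0] : Fin 3 → ℝ) ∈ S := by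
  simp only [S, Set.mem_setOf_eq]; norm_num [Matrix.cons_val_two]
lemma pL30 : L (-2) 25 (-2) 10 (![2/25, 0, 0]) = 0 := by norm_num [L, Matrix.cons_val_two]
lemma pS31 : (![22/25, 0, -2] : Fin 3 → ℝ) ∈ S := by
  simp only [S, Set.mem_setOf_eq]; norm_num [Matrix.cons_val_two]
lemma pL31 : L (-2) 25 (-2) 10 (![22/25, 0, -2]) = 0 := by norm_num [L, Matrix.cons_val_two]
lemma pS32 : (![61/125, 1/10, -1] : Fin 3 → ℝ) ∈ S := by
  simp only [S, Set.mem_setOf_eq]; norm_num [Matrix.cons_val_two]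
lemma pL32 : L (-2) 25 (-2) 10 (![61/125, 1/10, -1]) = 0 := by norm_num [L, Matrix.cons_val_two]
lemma pS40 : (![1, 0, 0] : Fin 3 → ℝ) ∈ S := by
  simp only [S, Set.mem_setOf_eq]; norm_num [Matrix.cons_val_two]
lemma pL40 : L 0 0 (-1) (-1) (![1, 0, 0]) = 0 := by norm_num [L, Matrix.cons_val_two]
lemma pS41 : (![2/25, 0, 0] : Fin 3 → ℝ) ∈ S := by
  simp only [S, Set.mem_setOf_eq]; norm_num [Matrix.cons_val_two]
lemma pL41 : L 0 0 (-1) (-1) (![2/25, 0, 0]) = 0 := by norm_num [L, Matrix.cons_val_two]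
lemma pS42 : (![1, 1/10, -1/10] : Fin 3 → ℝ) ∈ S := by
  simp only [S, Set.mem_setOf_eq]; norm_num [Matrix.cons_val_two]
lemma pL42 : L 0 0 (-1) (-1) (![1, 1/10, -1/10]) = 0 := by norm_num [L, Matrix.cons_val_two]
lemma pS50 : (![1, 0, -2] : Fin 3 → ℝ) ∈ S := by
  simp only [S, Set.mem_setOf_eq]; norm_num [Matrix.cons_val_two]
lemma pL50 : L 2 0 (-1) 1 (![1, 0, -2]) = 0 := by norm_num [L, Matrix.cons_val_two]
lemma pS51 : (![22/25, 0, -2] : Fin 3 → ℝ) ∈ S := by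
  simp only [S, Set.mem_setOf_eq]; norm_num [Matrix.cons_val_two]
lemma pL51 : L 2 0 (-1) 1 (![22/25, 0, -2]) = 0 := by norm_num [L, Matrix.cons_val_two]
lemma pS52 : (![1, 1/10, -19/10] : Fin 3 → ℝ) ∈ S := by
  simp only [S, Set.mem_setOf_eq]; norm_num [Matrix.cons_val_two]
lemma pL52 : L 2 0 (-1) 1 (![1, 1/10, -19/10]) = 0 := by norm_num [L, Matrix.cons_val_two]
lemma wS : (![1, 0, -1/2] : Fin 3 → ℝ) ∈ S := by
  simp only [S, Set.mem_setOf_eq]; norm_num [Matrix.cons_val_two]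
lemma wL0 : 0 < L 25 (-2) (-25) 10 (![1, 0, -1/2]) := by norm_num [L, Matrix.cons_val_two]
lemma wL1 : 0 < L (-2) 25 2 10 (![1, 0, -1/2]) := by norm_num [L, Matrix.cons_val_two]
lemma wL2 : 0 < L 25 (-2) 25 10 (![1, 0, -1/2]) := by norm_num [L, Matrix.cons_val_two]
lemma wL3 : 0 < L (-2) 25 (-2) 10 (![1, 0, -1/2]) := by norm_num [L, Matrix.cons_val_two]
lemma wL4 : 0 < L 0 0 (-1) (-1) (![1, 0, -1/2]) := by norm_num [L, Matrix.cons_val_two]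
lemma wL5 : 0 < L 2 0 (-1) 1 (![1, 0, -1/2]) := by norm_num [L, Matrix.cons_val_two]
lemma hfacet0 : IsFacet S {x ∈ S | L 25 (-2) (-25) 10 x = 0} := by
  apply facet_gen 25 (-2) (-25) 10 (![25/2, 0, 0]) (![5/2, 0, -2]) (![25/4, 1/10, -1]) ![1, 0, -1/2] hpos0 pS00 pL00 pS01 pL01 pS02 pL02 wS wL0
  intro u0 u1 u2 h1 h2
  norm_num [Matrix.cons_val_two] at h1 h2
  exact ⟨-u0/2, by linarith, by linarith, by linarith⟩
lemma hfacet1 : IsFacet S {x ∈ S | L (-2) 25 2 10 x = 0} := by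
  apply facet_gen (-2) 25 2 10 (![2/25, 0, 0]) (![22/25, 0, -2]) (![61/125, -1/10, -1]) ![1, 0, -1/2] hpos1 pS10 pL10 pS11 pL11 pS12 pL12 wS wL1
  intro u0 u1 u2 h1 h2
  norm_num [Matrix.cons_val_two] at h1 h2
  exact ⟨u0/25, by linarith, by linarith, by linarith⟩
lemma hfacet2 : IsFacet S {x ∈ S | L 25 (-2) 25 10 x = 0} := by
  apply facet_gen 25 (-2) 25 10 (![25/2, 0, 0]) (![5/2, 0, -2]) (![25/4, -1/10, -1]) ![1, 0, -1/2] hpos2 pS20 pL20 pS21 pL21 pS22 pL22 wS wL2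
  intro u0 u1 u2 h1 h2
  norm_num [Matrix.cons_val_two] at h1 h2
  exact ⟨-u0/2, by linarith, by linarith, by linarith⟩
lemma hfacet3 : IsFacet S {x ∈ S | L (-2) 25 (-2) 10 x = 0} := by
  apply facet_gen (-2) 25 (-2) 10 (![2/25, 0, 0]) (![22/25, 0, -2]) (![61/125, 1/10, -1]) ![1, 0, -1/2] hpos3 pS30 pL30 pS31 pL31 pS32 pL32 wS wL3
  intro u0 u1 u2 h1 h2
  norm_num [Matrix.cons_val_two] at h1 h2
  exact ⟨u0/25, by linarith, by linarith, by linarith⟩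
lemma hfacet4 : IsFacet S {x ∈ S | L 0 0 (-1) (-1) x = 0} := by
  apply facet_gen 0 0 (-1) (-1) (![1, 0, 0]) (![2/25, 0, 0]) (![1, 1/10, -1/10]) ![1, 0, -1/2] hpos4 pS40 pL40 pS41 pL41 pS42 pL42 wS wL4
  intro u0 u1 u2 h1 h2
  norm_num [Matrix.cons_val_two] at h1 h2
  exact ⟨-u1, by linarith, by linarith, by linarith⟩
lemma hfacet5 : IsFacet S {x ∈ S | L 2 0 (-1) 1 x = 0} := by
  apply facet_gen 2 0 (-1) 1 (![1, 0, -2]) (![22/25, 0, -2]) (![1, 1/10, -19/10]) ![1, 0, -1/2] hpos5 pS50 pL50 pS51 pL51 pS52 pL52 wS wL5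
  intro u0 u1 u2 h1 h2
  norm_num [Matrix.cons_val_two] at h1 h2
  exact ⟨-u1, by linarith, by linarith, by linarith⟩
lemma dne01 : {x ∈ S | L 25 (-2) (-25) 10 x = 0} ≠ {x ∈ S | L (-2) 25 2 10 x = 0} :=
  F_ne (![25/4, 1/10, -1]) (by simp only [S, Set.mem_setOf_eq]; norm_num [Matrix.cons_val_two]) (by norm_num [L, Matrix.cons_val_two]) (by norm_num [L, Matrix.cons_val_two])
lemma dne02 : {x ∈ S | L 25 (-2) (-25) 10 x = 0} ≠ {x ∈ S | L 25 (-2) 25 10 x = 0} :=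
  F_ne (![25/4, 1/10, -1]) (by simp only [S, Set.mem_setOf_eq]; norm_num [Matrix.cons_val_two]) (by norm_num [L, Matrix.cons_val_two]) (by norm_num [L, Matrix.cons_val_two])
lemma dne03 : {x ∈ S | L 25 (-2) (-25) 10 x = 0} ≠ {x ∈ S | L (-2) 25 (-2) 10 x = 0} :=
  F_ne (![25/4, 1/10, -1]) (by simp only [S, Set.mem_setOf_eq]; norm_num [Matrix.cons_val_two]) (by norm_num [L, Matrix.cons_val_two]) (by norm_num [L, Matrix.cons_val_two])
lemma dne04 : {x ∈ S | L 25 (-2) (-25) 10 x = 0} ≠ {x ∈ S | L 0 0 (-1) (-1) x = 0} :=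
  F_ne (![25/4, 1/10, -1]) (by simp only [S, Set.mem_setOf_eq]; norm_num [Matrix.cons_val_two]) (by norm_num [L, Matrix.cons_val_two]) (by norm_num [L, Matrix.cons_val_two])
lemma dne05 : {x ∈ S | L 25 (-2) (-25) 10 x = 0} ≠ {x ∈ S | L 2 0 (-1) 1 x = 0} :=
  F_ne (![25/4, 1/10, -1]) (by simp only [S, Set.mem_setOf_eq]; norm_num [Matrix.cons_val_two]) (by norm_num [L, Matrix.cons_val_two]) (by norm_num [L, Matrix.cons_val_two])
lemma dne10 : {x ∈ S | L (-2) 25 2 10 x = 0} ≠ {x ∈ S | L 25 (-2) (-25) 10 x = 0} :=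
  F_ne (![61/125, -1/10, -1]) (by simp only [S, Set.mem_setOf_eq]; norm_num [Matrix.cons_val_two]) (by norm_num [L, Matrix.cons_val_two]) (by norm_num [L, Matrix.cons_val_two])
lemma dne12 : {x ∈ S | L (-2) 25 2 10 x = 0} ≠ {x ∈ S | L 25 (-2) 25 10 x = 0} :=
  F_ne (![61/125, -1/10, -1]) (by simp only [S, Set.mem_setOf_eq]; norm_num [Matrix.cons_val_two]) (by norm_num [L, Matrix.cons_val_two]) (by norm_num [L, Matrix.cons_val_two])
lemma dne13 : {x ∈ S | L (-2) 25 2 10 x = 0} ≠ {x ∈ S | L (-2) 25 (-2) 10 x = 0} :=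
  F_ne (![61/125, -1/10, -1]) (by simp only [S, Set.mem_setOf_eq]; norm_num [Matrix.cons_val_two]) (by norm_num [L, Matrix.cons_val_two]) (by norm_num [L, Matrix.cons_val_two])
lemma dne14 : {x ∈ S | L (-2) 25 2 10 x = 0} ≠ {x ∈ S | L 0 0 (-1) (-1) x = 0} :=
  F_ne (![61/125, -1/10, -1]) (by simp only [S, Set.mem_setOf_eq]; norm_num [Matrix.cons_val_two]) (by norm_num [L, Matrix.cons_val_two]) (by norm_num [L, Matrix.cons_val_two])
lemma dne15 : {x ∈ S | L (-2) 25 2 10 x = 0} ≠ {x ∈ S | L 2 0 (-1) 1 x = 0} :=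
  F_ne (![61/125, -1/10, -1]) (by simp only [S, Set.mem_setOf_eq]; norm_num [Matrix.cons_val_two]) (by norm_num [L, Matrix.cons_val_two]) (by norm_num [L, Matrix.cons_val_two])
lemma dne20 : {x ∈ S | L 25 (-2) 25 10 x = 0} ≠ {x ∈ S | L 25 (-2) (-25) 10 x = 0} :=
  F_ne (![25/4, -1/10, -1]) (by simp only [S, Set.mem_setOf_eq]; norm_num [Matrix.cons_val_two]) (by norm_num [L, Matrix.cons_val_two]) (by norm_num [L, Matrix.cons_val_two])
lemma dne21 : {x ∈ S | L 25 (-2) 25 10 x = 0} ≠ {x ∈ S | L (-2) 25 2 10 x = 0} :=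
  F_ne (![25/4, -1/10, -1]) (by simp only [S, Set.mem_setOf_eq]; norm_num [Matrix.cons_val_two]) (by norm_num [L, Matrix.cons_val_two]) (by norm_num [L, Matrix.cons_val_two])
lemma dne23 : {x ∈ S | L 25 (-2) 25 10 x = 0} ≠ {x ∈ S | L (-2) 25 (-2) 10 x = 0} :=
  F_ne (![25/4, -1/10, -1]) (by simp only [S, Set.mem_setOf_eq]; norm_num [Matrix.cons_val_two]) (by norm_num [L, Matrix.cons_val_two]) (by norm_num [L, Matrix.cons_val_two])
lemma dne24 : {x ∈ S | L 25 (-2) 25 10 x = 0} ≠ {x ∈ S | L 0 0 (-1) (-1) x = 0} :=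
  F_ne (![25/4, -1/10, -1]) (by simp only [S, Set.mem_setOf_eq]; norm_num [Matrix.cons_val_two]) (by norm_num [L, Matrix.cons_val_two]) (by norm_num [L, Matrix.cons_val_two])
lemma dne25 : {x ∈ S | L 25 (-2) 25 10 x = 0} ≠ {x ∈ S | L 2 0 (-1) 1 x = 0} :=
  F_ne (![25/4, -1/10, -1]) (by simp only [S, Set.mem_setOf_eq]; norm_num [Matrix.cons_val_two]) (by norm_num [L, Matrix.cons_val_two]) (by norm_num [L, Matrix.cons_val_two])
lemma dne30 : {x ∈ S | L (-2) 25 (-2) 10 x = 0} ≠ {x ∈ S | L 25 (-2) (-25) 10 x = 0} :=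
  F_ne (![61/125, 1/10, -1]) (by simp only [S, Set.mem_setOf_eq]; norm_num [Matrix.cons_val_two]) (by norm_num [L, Matrix.cons_val_two]) (by norm_num [L, Matrix.cons_val_two])
lemma dne31 : {x ∈ S | L (-2) 25 (-2) 10 x = 0} ≠ {x ∈ S | L (-2) 25 2 10 x = 0} :=
  F_ne (![61/125, 1/10, -1]) (by simp only [S, Set.mem_setOf_eq]; norm_num [Matrix.cons_val_two]) (by norm_num [L, Matrix.cons_val_two]) (by norm_num [L, Matrix.cons_val_two])
lemma dne32 : {x ∈ S | L (-2) 25 (-2) 10 x = 0} ≠ {x ∈ S | L 25 (-2) 25 10 x = 0} :=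
  F_ne (![61/125, 1/10, -1]) (by simp only [S, Set.mem_setOf_eq]; norm_num [Matrix.cons_val_two]) (by norm_num [L, Matrix.cons_val_two]) (by norm_num [L, Matrix.cons_val_two])
lemma dne34 : {x ∈ S | L (-2) 25 (-2) 10 x = 0} ≠ {x ∈ S | L 0 0 (-1) (-1) x = 0} :=
  F_ne (![61/125, 1/10, -1]) (by simp only [S, Set.mem_setOf_eq]; norm_num [Matrix.cons_val_two]) (by norm_num [L, Matrix.cons_val_two]) (by norm_num [L, Matrix.cons_val_two])
lemma dne35 : {x ∈ S | L (-2) 25 (-2) 10 x = 0} ≠ {x ∈ S | L 2 0 (-1) 1 x = 0} :=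
  F_ne (![61/125, 1/10, -1]) (by simp only [S, Set.mem_setOf_eq]; norm_num [Matrix.cons_val_two]) (by norm_num [L, Matrix.cons_val_two]) (by norm_num [L, Matrix.cons_val_two])
lemma dne40 : {x ∈ S | L 0 0 (-1) (-1) x = 0} ≠ {x ∈ S | L 25 (-2) (-25) 10 x = 0} :=
  F_ne (![1, 0, 0]) (by simp only [S, Set.mem_setOf_eq]; norm_num [Matrix.cons_val_two]) (by norm_num [L, Matrix.cons_val_two]) (by norm_num [L, Matrix.cons_val_two])
lemma dne41 : {x ∈ S | L 0 0 (-1) (-1) x = 0} ≠ {x ∈ S | L (-2) 25 2 10 x = 0} :=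
  F_ne (![1, 0, 0]) (by simp only [S, Set.mem_setOf_eq]; norm_num [Matrix.cons_val_two]) (by norm_num [L, Matrix.cons_val_two]) (by norm_num [L, Matrix.cons_val_two])
lemma dne42 : {x ∈ S | L 0 0 (-1) (-1) x = 0} ≠ {x ∈ S | L 25 (-2) 25 10 x = 0} :=
  F_ne (![1, 0, 0]) (by simp only [S, Set.mem_setOf_eq]; norm_num [Matrix.cons_val_two]) (by norm_num [L, Matrix.cons_val_two]) (by norm_num [L, Matrix.cons_val_two])
lemma dne43 : {x ∈ S | L 0 0 (-1) (-1) x = 0} ≠ {x ∈ S | L (-2) 25 (-2) 10 x = 0} :=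
  F_ne (![1, 0, 0]) (by simp only [S, Set.mem_setOf_eq]; norm_num [Matrix.cons_val_two]) (by norm_num [L, Matrix.cons_val_two]) (by norm_num [L, Matrix.cons_val_two])
lemma dne45 : {x ∈ S | L 0 0 (-1) (-1) x = 0} ≠ {x ∈ S | L 2 0 (-1) 1 x = 0} :=
  F_ne (![1, 0, 0]) (by simp only [S, Set.mem_setOf_eq]; norm_num [Matrix.cons_val_two]) (by norm_num [L, Matrix.cons_val_two]) (by norm_num [L, Matrix.cons_val_two])
lemma dne50 : {x ∈ S | L 2 0 (-1) 1 x = 0} ≠ {x ∈ S | L 25 (-2) (-25) 10 x = 0} :=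
  F_ne (![1, 0, -2]) (by simp only [S, Set.mem_setOf_eq]; norm_num [Matrix.cons_val_two]) (by norm_num [L, Matrix.cons_val_two]) (by norm_num [L, Matrix.cons_val_two])
lemma dne51 : {x ∈ S | L 2 0 (-1) 1 x = 0} ≠ {x ∈ S | L (-2) 25 2 10 x = 0} :=
  F_ne (![1, 0, -2]) (by simp only [S, Set.mem_setOf_eq]; norm_num [Matrix.cons_val_two]) (by norm_num [L, Matrix.cons_val_two]) (by norm_num [L, Matrix.cons_val_two])
lemma dne52 : {x ∈ S | L 2 0 (-1) 1 x = 0} ≠ {x ∈ S | L 25 (-2) 25 10 x = 0} :=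
  F_ne (![1, 0, -2]) (by simp only [S, Set.mem_setOf_eq]; norm_num [Matrix.cons_val_two]) (by norm_num [L, Matrix.cons_val_two]) (by norm_num [L, Matrix.cons_val_two])
lemma dne53 : {x ∈ S | L 2 0 (-1) 1 x = 0} ≠ {x ∈ S | L (-2) 25 (-2) 10 x = 0} :=
  F_ne (![1, 0, -2]) (by simp only [S, Set.mem_setOf_eq]; norm_num [Matrix.cons_val_two]) (by norm_num [L, Matrix.cons_val_two]) (by norm_num [L, Matrix.cons_val_two])
lemma dne54 : {x ∈ S | L 2 0 (-1) 1 x = 0} ≠ {x ∈ S | L 0 0 (-1) (-1) x = 0} :=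
  F_ne (![1, 0, -2]) (by simp only [S, Set.mem_setOf_eq]; norm_num [Matrix.cons_val_two]) (by norm_num [L, Matrix.cons_val_two]) (by norm_num [L, Matrix.cons_val_two])

/-- S has exactly six facets. -/
theorem stmt_6 :
    {F | IsFacet S F}.Finite ∧ {F | IsFacet S F}.ncard = 6 := by
  have hset : {F | IsFacet S F} =
      {{x ∈ S | L 25 (-2) (-25) 10 x = 0}, {x ∈ S | L (-2) 25 2 10 x = 0}, {x ∈ S | L 25 (-2) 25 10 x = 0}, {x ∈ S | L (-2) 25 (-2) 10 x = 0}, {x ∈ S | L 0 0 (-1) (-1) x = 0}, {x ∈ S | L 2 0 (-1) 1 x = 0}} := by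
    ext G
    simp only [Set.mem_setOf_eq, Set.mem_insert_iff, Set.mem_singleton_iff]
    constructor
    · rintro ⟨hexp, hne, hmaxG⟩
      rcases G.eq_empty_or_nonempty with hGe | hGn
      · exfalso
        have h0 := hmaxG _ hfacet0.1 hfacet0.2.1 (by rw [hGe]; exact Set.empty_subset _)
        have h2 : (![25/4, 1/10, -1] : Fin 3 → ℝ) ∈ G := by
          rw [h0]; exact ⟨pS02, pL02⟩
        rw [hGe] at h2
        exact Set.notMem_empty _ h2
      · rcases exposed_subset G hexp hne hGn with h|h|h|h|h|h
        · exact Or.inl (hmaxG _ hfacet0.1 hfacet0.2.1 h)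
        · exact Or.inr (Or.inl (hmaxG _ hfacet1.1 hfacet1.2.1 h))
        · exact Or.inr (Or.inr (Or.inl (hmaxG _ hfacet2.1 hfacet2.2.1 h)))
        · exact Or.inr (Or.inr (Or.inr (Or.inl (hmaxG _ hfacet3.1 hfacet3.2.1 h))))
        · exact Or.inr (Or.inr (Or.inr (Or.inr (Or.inl (hmaxG _ hfacet4.1 hfacet4.2.1 h)))))
        · exact Or.inr (Or.inr (Or.inr (Or.inr (Or.inr (hmaxG _ hfacet5.1 hfacet5.2.1 h)))))
    · rintro (rfl|rfl|rfl|rfl|rfl|rfl)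
      exacts [hfacet0, hfacet1, hfacet2, hfacet3, hfacet4, hfacet5]
  rw [hset]
  have fin5 : ({{x ∈ S | L 2 0 (-1) 1 x = 0}} : Set (Set (Fin 3 → ℝ))).Finite := Set.finite_singleton _
  have fin45 := fin5.insert ({x ∈ S | L 0 0 (-1) (-1) x = 0})
  have fin345 := fin45.insert ({x ∈ S | L (-2) 25 (-2) 10 x = 0})
  have fin2345 := fin345.insert ({x ∈ S | L 25 (-2) 25 10 x = 0})
  have fin12345 := fin2345.insert ({x ∈ S | L (-2) 25 2 10 x = 0})
  have fin012345 := fin12345.insert ({x ∈ S | L 25 (-2) (-25) 10 x = 0})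
  refine ⟨fin012345, ?_⟩
  have m5 : ({{x ∈ S | L 2 0 (-1) 1 x = 0}} : Set (Set (Fin 3 → ℝ))).ncard = 1 := Set.ncard_singleton _
  have m45 : ({{x ∈ S | L 0 0 (-1) (-1) x = 0}, {x ∈ S | L 2 0 (-1) 1 x = 0}} : Set (Set (Fin 3 → ℝ))).ncard = 2 := by
    rw [Set.ncard_insert_of_notMem (by simp only [Set.mem_singleton_iff]; exact dne45) fin5, m5]
  have m345 : ({{x ∈ S | L (-2) 25 (-2) 10 x = 0}, {x ∈ S | L 0 0 (-1) (-1) x = 0}, {x ∈ S | L 2 0 (-1) 1 x = 0}} : Set (Set (Fin 3 → ℝ))).ncard = 3 := by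
    rw [Set.ncard_insert_of_notMem (by simp only [Set.mem_insert_iff, Set.mem_singleton_iff]; push_neg; exact ⟨dne34, dne35⟩) fin45, m45]
  have m2345 : ({{x ∈ S | L 25 (-2) 25 10 x = 0}, {x ∈ S | L (-2) 25 (-2) 10 x = 0}, {x ∈ S | L 0 0 (-1) (-1) x = 0}, {x ∈ S | L 2 0 (-1) 1 x = 0}} : Set (Set (Fin 3 → ℝ))).ncard = 4 := by
    rw [Set.ncard_insert_of_notMem (by simp only [Set.mem_insert_iff, Set.mem_singleton_iff]; push_neg; exact ⟨dne23, dne24, dne25⟩) fin345, m345]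
  have m12345 : ({{x ∈ S | L (-2) 25 2 10 x = 0}, {x ∈ S | L 25 (-2) 25 10 x = 0}, {x ∈ S | L (-2) 25 (-2) 10 x = 0}, {x ∈ S | L 0 0 (-1) (-1) x = 0}, {x ∈ S | L 2 0 (-1) 1 x = 0}} : Set (Set (Fin 3 → ℝ))).ncard = 5 := by
    rw [Set.ncard_insert_of_notMem (by simp only [Set.mem_insert_iff, Set.mem_singleton_iff]; push_neg; exact ⟨dne12, dne13, dne14, dne15⟩) fin2345, m2345]
  rw [Set.ncard_insert_of_notMem (by simp only [Set.mem_insert_iff, Set.mem_singleton_iff]; push_neg; exact ⟨dne01, dne02, dne03, dne04, dne05⟩) fin12345, m12345]
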